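/- Let A and B be groups and let I be any (index) type. Then the wreath product (Π_{i ∈ I} A) ≀ B of the Cartesian power of A by B lies in var(A ≀ B), i.e., every law of A ≀ B is a law of (I → A) ≀ B. -/
import Mathlib

/-- A word `w` in the free group on `k` generators is a law of the group `H`
if every homomorphism from the free group to `H` sends `w` to `1`. -/
def IsGroupLaw (H : Type*) [Group H] {k : ℕ} (w : FreeGroup (Fin k)) : Prop :=
  ∀ φ : FreeGroup (Fin k) →* H, φ w = 1

/-- `G` lies in the variety generated by `H`: every law of `H` is a law of `G`. -/
def InVariety (G : Type*) [Group G] (H : Type*) [Group H] : Prop :=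
  ∀ (k : ℕ) (w : FreeGroup (Fin k)), IsGroupLaw H w → IsGroupLaw G w

/-- The shifting action of `B` on the Cartesian power `B → A`:
`(b • f) x = f (b⁻¹ * x)`. -/
def wreathShift (A B : Type*) [Group A] [Group B] : B →* MulAut (B → A) where
  toFun b :=
    { toFun := fun f x => f (b⁻¹ * x)
      invFun := fun f x => f (b * x)
      left_inv := fun f => by funext x; simp [mul_assoc]
      right_inv := fun f => by funext x; simp [mul_assoc]
      map_mul' := fun f g => rfl }
  map_one' := by ext f x; simp
  map_mul' b₁ b₂ := by ext f x; simp [mul_assoc]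

/-- The (standard, Cartesian) wreath product `A ≀ B = (B → A) ⋊ B`. -/
abbrev WreathProduct (A B : Type*) [Group A] [Group B] : Type _ :=
  SemidirectProduct (B → A) B (wreathShift A B)

/-- Evaluation at `i` on the base group, as a monoid hom. -/
def evalHom (A B : Type*) [Group A] [Group B] (I : Type*) (i : I) :
    (B → I → A) →* (B → A) where
  toFun f x := f x i
  map_one' := rfl
  map_mul' _ _ := rfl

theorem cartesian_power_wreath_in_variety (A B : Type*) [Group A] [Group B] (I : Type*) :
    InVariety (WreathProduct (I → A) B) (WreathProduct A B) := by
  intro k w hw φ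
  -- right component
  have hr : (φ w).right = 1 := by
    have h := hw ((SemidirectProduct.inr.comp SemidirectProduct.rightHom).comp φ)
    simpa using congrArg SemidirectProduct.rightHom h
  have hl : (φ w).left = 1 := by
    funext x
    funext i
    have comm : ∀ b : B, (evalHom A B I i).comp ((wreathShift (I → A) B b).toMonoidHom)
        = ((wreathShift A B ((MonoidHom.id B) b)).toMonoidHom).comp (evalHom A B I i) := by
      intro b; rfl
    have h := hw ((SemidirectProduct.map (evalHom A B I i) (MonoidHom.id B) comm).comp φ)
    have := congrArg SemidirectProduct.left h
    have := congrFun this x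
    simpa [evalHom] using this
  exact SemidirectProduct.ext hl hr
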